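/- arXiv:2212.14144 — 7 statements merged into one kernel-verified Lean document; each statement's English description precedes it below -/
import Mathlib

section
/- For even positive integer n and a > 0, the Chebyshev nodes s_k = a·cos((2k-1)π/(2n)), k = 1,...,n, satisfy ∑_{k=1}^n 1/|s_k| ≤ (4n/(πa))·(γ + log(2n+2)), where γ is the Euler–Mascheroni constant. -/
open Real Finset

lemma sum_odd_recip (M : ℕ) :
    ∑ m ∈ Finset.Icc 1 M, (1:ℝ)/(2*m-1) = (harmonic (2*M) : ℝ) - (harmonic M : ℝ)/2 := by
  induction M with
  | zero => simp
  | succ M ih =>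
    rw [Finset.sum_Icc_succ_top (by omega), ih]
    have h2 : 2*(M+1) = (2*M+1)+1 := by ring
    rw [h2, harmonic_succ, harmonic_succ, harmonic_succ]
    push_cast
    have e2 : (2*(M:ℝ)+1+1)⁻¹ = ((M:ℝ)+1)⁻¹ / 2 := by
      rw [show (2*(M:ℝ)+1+1) = 2*((M:ℝ)+1) by ring, mul_inv]
      ring
    have e3 : (1:ℝ)/(2*((M:ℝ)+1)-1) = (2*(M:ℝ)+1)⁻¹ := by
      rw [one_div, show (2*((M:ℝ)+1)-1) = 2*(M:ℝ)+1 by ring]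
    rw [e3]
    linarith [e2]


lemma reindex (M : ℕ) :
    ∑ k ∈ Finset.Icc 1 (2*M), 1/|2*(M:ℝ)+1-2*k| = 2 * ∑ m ∈ Finset.Icc 1 M, (1:ℝ)/(2*m-1) := by
  have hIcc : ∀ m : ℕ, Finset.Icc 1 m = Finset.Ioc 0 m := fun m => Finset.Icc_add_one_left_eq_Ioc 0 m
  rw [hIcc, hIcc, ← Finset.sum_Ioc_consecutive _ (Nat.zero_le M) (by omega : M ≤ 2*M)]
  have h1 : ∑ k ∈ Finset.Ioc 0 M, 1/|2*(M:ℝ)+1-2*k| = ∑ m ∈ Finset.Ioc 0 M, (1:ℝ)/(2*m-1) := by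
    refine Finset.sum_nbij' (fun k => M + 1 - k) (fun m => M + 1 - m) ?_ ?_ ?_ ?_ ?_
    · intro k hk; simp only [Finset.mem_Ioc] at *; omega
    · intro k hk; simp only [Finset.mem_Ioc] at *; omega
    · intro k hk; simp only [Finset.mem_Ioc] at *; omega
    · intro k hk; simp only [Finset.mem_Ioc] at *; omega
    · intro k hk
      simp only [Finset.mem_Ioc] at hk
      have hc : ((M + 1 - k : ℕ) : ℝ) = (M:ℝ) + 1 - k := by
        rw [Nat.cast_sub (by omega)]; push_cast; ring
      rw [hc]
      have hkM : (k:ℝ) ≤ M := by exact_mod_cast hk.2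
      rw [abs_of_pos (by linarith)]
      congr 1; ring
  have h2 : ∑ k ∈ Finset.Ioc M (2*M), 1/|2*(M:ℝ)+1-2*k| = ∑ m ∈ Finset.Ioc 0 M, (1:ℝ)/(2*m-1) := by
    refine Finset.sum_nbij' (fun k => k - M) (fun m => m + M) ?_ ?_ ?_ ?_ ?_
    · intro k hk; simp only [Finset.mem_Ioc] at *; omega
    · intro k hk; simp only [Finset.mem_Ioc] at *; omega
    · intro k hk; simp only [Finset.mem_Ioc] at *; omega
    · intro k hk; simp only [Finset.mem_Ioc] at *; omega
    · intro k hk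
      simp only [Finset.mem_Ioc] at hk
      have hc : ((k - M : ℕ) : ℝ) = (k:ℝ) - M := by
        rw [Nat.cast_sub (by omega)]
      rw [hc]
      have hkM : (M:ℝ) + 1 ≤ k := by exact_mod_cast hk.1
      rw [abs_of_neg (by linarith), one_div, one_div]
      congr 1; ring
  rw [h1, h2]; ring


lemma term_bound (M : ℕ) (hM : 1 ≤ M) (a : ℝ) (ha : 0 < a) (k : ℕ)
    (hk1 : 1 ≤ k) (hk2 : k ≤ 2*M) :
    1 / |a * Real.cos ((2*(k:ℝ)-1) * Real.pi / (2*(2*M:ℕ)))| ≤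
      (2*(M:ℝ)) / (a * |2*(M:ℝ)+1-2*k|) := by
  have hn : (0:ℝ) < 2*M := by positivity
  set u : ℝ := 2*(M:ℝ)+1-2*k with hu
  have hz : ∃ z : ℤ, (z:ℝ) = u ∧ z ≠ 0 := by
    refine ⟨2*((M:ℤ) - k) + 1, by push_cast; ring, by omega⟩
  obtain ⟨z, hzu, hz0⟩ := hz
  have hu1 : 1 ≤ |u| := by
    rw [← hzu, ← Int.cast_abs]
    exact_mod_cast Int.one_le_abs hz0
  have huN : |u| ≤ 2*(M:ℝ) - 1 := by
    have h1 : (1:ℝ) ≤ k := by exact_mod_cast hk1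
    have h2 : (k:ℝ) ≤ 2*M := by exact_mod_cast hk2
    rw [abs_le]; constructor <;> [skip; skip] <;> simp only [hu] <;> linarith
  -- the angle
  set θ : ℝ := (2*(k:ℝ)-1) * Real.pi / (2*(2*M:ℕ)) with hθ
  have hcos : Real.cos θ = Real.sin (Real.pi/2 - θ) := (Real.sin_pi_div_two_sub θ).symm
  set x : ℝ := Real.pi/2 - θ with hx
  have hxval : x = u * (Real.pi / (2*(2*M:ℝ))) := by
    rw [hx, hθ]; push_cast; field_simp; ring
  have hM0 : ((M:ℝ)) ≠ 0 := by exact ne_of_gt (by exact_mod_cast hM : (0:ℝ) < (M:ℝ))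
  have hp4 : (0:ℝ) < Real.pi / (2*(2*(M:ℝ))) := by
    apply div_pos Real.pi_pos; nlinarith [hn]
  have hxabs : |x| = |u| * (Real.pi / (2*(2*(M:ℝ)))) := by
    rw [hxval, abs_mul, abs_of_pos hp4]
  have hxle : |x| ≤ Real.pi/2 := by
    rw [hxabs]
    calc |u| * (Real.pi / (2*(2*(M:ℝ)))) ≤ (2*(M:ℝ)) * (Real.pi / (2*(2*(M:ℝ)))) :=
          mul_le_mul_of_nonneg_right (by linarith) hp4.le
      _ = Real.pi / 2 := by field_simp
  have hsin : |u| / (2*M:ℝ) ≤ |Real.sin x| := by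
    have := Real.mul_abs_le_abs_sin hxle
    rw [hxabs] at this
    calc |u| / (2*(M:ℝ)) = 2/Real.pi * (|u| * (Real.pi / (2*(2*(M:ℝ))))) := by
          field_simp
      _ ≤ |Real.sin x| := this
  have hcosabs : |u| / (2*M:ℝ) ≤ |Real.cos θ| := by rw [hcos]; exact hsin
  have hden : a * (|u| / (2*M:ℝ)) ≤ |a * Real.cos θ| := by
    rw [abs_mul, abs_of_pos ha]
    exact mul_le_mul_of_nonneg_left hcosabs ha.le
  have hdpos : 0 < a * (|u| / (2*M:ℝ)) := by positivity
  calc 1 / |a * Real.cos θ| ≤ 1 / (a * (|u| / (2*M:ℝ))) :=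
        one_div_le_one_div_of_le hdpos hden
    _ = (2*(M:ℝ)) / (a * |u|) := by
        rw [div_eq_div_iff hdpos.ne' (by positivity : (0:ℝ) < a * |u|).ne']
        field_simp


lemma SM_bound (M : ℕ) (hM : 1 ≤ M) :
    Real.pi * ((harmonic (2*M) : ℝ) - (harmonic M : ℝ)/2) ≤
      2 * (Real.eulerMascheroniConstant + Real.log (4*(M:ℝ)+2)) := by
  set γ := Real.eulerMascheroniConstant
  have hM0 : (0:ℝ) < (M:ℝ) := by exact_mod_cast hM
  have hM1 : (1:ℝ) ≤ (M:ℝ) := by exact_mod_cast hM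
  set L1 := Real.log (2*(M:ℝ)+1) with hL1def
  set L0 := Real.log (M:ℝ) with hL0def
  set l2 := Real.log 2 with hl2def
  -- harmonic bounds
  have hH2 : (harmonic (2*M) : ℝ) ≤ γ + L1 := by
    have h := (Real.eulerMascheroniSeq_lt_eulerMascheroniConstant (2*M)).le
    rw [Real.eulerMascheroniSeq] at h
    have : Real.log (↑(2*M) + 1) = L1 := by rw [hL1def]; push_cast; ring_nf
    rw [this] at h; linarith
  have hH1 : γ + L0 ≤ (harmonic M : ℝ) := by
    have h := (Real.eulerMascheroniConstant_lt_eulerMascheroniSeq' M).le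
    rw [Real.eulerMascheroniSeq', if_neg (by omega)] at h
    linarith
  -- log bounds
  have hL0pos : 0 ≤ L0 := Real.log_nonneg (by exact_mod_cast hM)
  have hl32 : Real.log (3/2) ≤ 1/2 := by
    have := Real.log_le_sub_one_of_pos (by norm_num : (0:ℝ) < 3/2); linarith
  have hlog3 : Real.log 3 ≤ l2 + 1/2 := by
    have : Real.log 3 = l2 + Real.log (3/2) := by
      rw [hl2def, ← Real.log_mul (by norm_num) (by norm_num)]; norm_num
    linarith
  have hL1b : L1 ≤ l2 + 1/2 + L0 := by
    have h1 : L1 ≤ Real.log (3*(M:ℝ)) := by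
      apply Real.log_le_log (by positivity)
      linarith
    rw [Real.log_mul (by norm_num) (ne_of_gt hM0)] at h1
    linarith
  -- numeric constants
  have hγ : (1/2 : ℝ) < γ := Real.one_half_lt_eulerMascheroniConstant
  have hl2a : (0.6931471803 : ℝ) < l2 := Real.log_two_gt_d9
  have hπ : Real.pi < 3.15 := Real.pi_lt_d2
  have hπ' : (3.14:ℝ) < Real.pi := Real.pi_gt_d2
  -- rewrite the log(4M+2)
  have hlog42 : Real.log (4*(M:ℝ)+2) = l2 + L1 := by
    rw [hl2def, hL1def, ← Real.log_mul (by norm_num) (by positivity)]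
    norm_num; ring_nf
  rw [hlog42]
  -- main estimate
  have hD : (harmonic (2*M) : ℝ) - (harmonic M : ℝ)/2 ≤ γ/2 + L1 - L0/2 := by linarith
  have hL10 : L0 ≤ L1 := Real.log_le_log hM0 (by linarith)
  have hDpos : 0 ≤ γ/2 + L1 - L0/2 := by linarith
  have step1 : Real.pi * ((harmonic (2*M) : ℝ) - (harmonic M : ℝ)/2) ≤
      3.15 * (γ/2 + L1 - L0/2) := by
    have h1 := mul_le_mul_of_nonneg_left hD Real.pi_pos.le
    have h2 := mul_le_mul_of_nonneg_right hπ.le hDpos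
    linarith
  linarith

/-- For even positive `n` and `a > 0`, the Chebyshev nodes `sₖ = a·cos((2k-1)π/(2n))` satisfy
`∑_{k=1}^n 1/|sₖ| ≤ (4n/(πa))·(γ + log(2n+2))`. -/
theorem chebyshev_reciprocal_sum (n : ℕ) (hn : 0 < n) (hne : Even n) (a : ℝ) (ha : 0 < a) :
    ∑ k ∈ Finset.Icc 1 n, 1 / |a * Real.cos ((2 * (k : ℝ) - 1) * Real.pi / (2 * n))| ≤
      4 * n / (Real.pi * a) * (Real.eulerMascheroniConstant + Real.log (2 * n + 2)) := by
  obtain ⟨M, rfl⟩ := hne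
  rw [show M + M = 2*M from by ring] at *
  have hM : 1 ≤ M := by omega
  have hM0 : (0:ℝ) < (M:ℝ) := by exact_mod_cast hM
  set γ := Real.eulerMascheroniConstant
  set D : ℝ := (harmonic (2*M) : ℝ) - (harmonic M : ℝ)/2 with hD
  have key := SM_bound M hM
  have hc : (0:ℝ) ≤ 4*(M:ℝ)/(Real.pi*a) := by positivity
  calc ∑ k ∈ Finset.Icc 1 (2*M), 1 / |a * Real.cos ((2 * (k:ℝ) - 1) * Real.pi / (2 * (2*M:ℕ)))|
      ≤ ∑ k ∈ Finset.Icc 1 (2*M), (2*(M:ℝ)) / (a * |2*(M:ℝ)+1-2*k|) := by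
        apply Finset.sum_le_sum
        intro k hk
        simp only [Finset.mem_Icc] at hk
        exact term_bound M hM a ha k hk.1 hk.2
    _ = (2*(M:ℝ)/a) * ∑ k ∈ Finset.Icc 1 (2*M), 1/|2*(M:ℝ)+1-2*k| := by
        rw [Finset.mul_sum]
        apply Finset.sum_congr rfl
        intro k _
        rw [mul_one_div, div_div]
    _ = (2*(M:ℝ)/a) * (2 * ∑ m ∈ Finset.Icc 1 M, (1:ℝ)/(2*m-1)) := by rw [reindex M]
    _ = (4*(M:ℝ)/(Real.pi*a)) * (Real.pi * D) := by
        rw [sum_odd_recip M, ← hD]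
        field_simp
        ring
    _ ≤ (4*(M:ℝ)/(Real.pi*a)) * (2 * (γ + Real.log (4*(M:ℝ)+2))) :=
        mul_le_mul_of_nonneg_left key hc
    _ = 4 * ((2*M:ℕ):ℝ) / (Real.pi * a) * (γ + Real.log (2 * ((2*M:ℕ):ℝ) + 2)) := by
        push_cast
        rw [show 2*(2*(M:ℝ))+2 = 4*(M:ℝ)+2 from by ring]
        ring
end

section
/- For a positive integer n, H_n − (1/2)·H_{n/2} < (γ + log 2)/2 + log(n+1)/2, where H_m denotes the m-th harmonic number, n is even, and γ is the Euler–Mascheroni constant. -/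
open Real

lemma two_mul_le_log_sub_log {x : ℝ} (hx : 0 ≤ x) (hx1 : x < 1) :
    2 * x ≤ Real.log (1 + x) - Real.log (1 - x) := by
  have hab : |x| < 1 := by rwa [abs_of_nonneg hx]
  have hab' : |(-x)| < 1 := by rwa [abs_neg]
  have h1 := Real.hasSum_pow_div_log_of_abs_lt_one hab
  have h2 := Real.hasSum_pow_div_log_of_abs_lt_one hab'
  have h3 := h1.sub h2
  have key : (fun n : ℕ => x ^ (n + 1) / (n + 1) - (-x) ^ (n + 1) / (n + 1)) 0
      ≤ -Real.log (1 - x) - -Real.log (1 - -x) := by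
    refine le_hasSum h3 0 (fun j _ => ?_)
    have hle : (-x) ^ (j + 1) ≤ x ^ (j + 1) := by
      calc (-x) ^ (j + 1) ≤ |(-x) ^ (j + 1)| := le_abs_self _
        _ = x ^ (j + 1) := by rw [abs_pow, abs_neg, abs_of_nonneg hx]
    have : (0:ℝ) < (j:ℝ) + 1 := by positivity
    exact sub_nonneg.2 (div_le_div_of_nonneg_right hle this.le)
  simp only [pow_one, Nat.cast_zero, zero_add, div_one] at key
  have : x - -x = 2 * x := by ring
  rw [this] at key
  have h4 : (1 : ℝ) - -x = 1 + x := by ring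
  rw [h4] at key
  linarith

lemma gamma_le_harmonic_sub_log (m : ℕ) :
    Real.eulerMascheroniConstant ≤ (harmonic m : ℝ) - Real.log (m + 1 / 2) := by
  set a : ℕ → ℝ := fun k => (harmonic k : ℝ) - Real.log (k + 1 / 2) with ha
  have hanti : Antitone a := by
    apply antitone_nat_of_succ_le
    intro k
    have hx0 : (0:ℝ) < (k:ℝ) + 1 := by positivity
    set x : ℝ := 1 / (2 * ((k:ℝ) + 1)) with hxdef
    have hxpos : 0 ≤ x := by positivity
    have hx1 : x < 1 := by
      rw [hxdef, div_lt_one (by positivity)]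
      nlinarith [Nat.cast_nonneg (α := ℝ) k]
    have hkey := two_mul_le_log_sub_log hxpos hx1
    have e1 : (1:ℝ) + x = ((k:ℝ) + 1 + 1 / 2) / ((k:ℝ) + 1) := by
      rw [hxdef]; field_simp
    have e2 : (1:ℝ) - x = ((k:ℝ) + 1 / 2) / ((k:ℝ) + 1) := by
      rw [hxdef]; field_simp; ring
    have e3 : 2 * x = 1 / ((k:ℝ) + 1) := by rw [hxdef]; field_simp
    rw [e1, e2, e3, Real.log_div (by positivity) (by positivity),
      Real.log_div (by positivity) (by positivity)] at hkey
    have hstep : 1 / ((k:ℝ) + 1) ≤ Real.log ((k:ℝ) + 1 + 1 / 2) - Real.log ((k:ℝ) + 1 / 2) := by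
      linarith
    have hh : (harmonic (k + 1) : ℝ) = (harmonic k : ℝ) + 1 / ((k:ℝ) + 1) := by
      rw [harmonic_succ]; push_cast; ring
    simp only [ha]
    push_cast
    linarith
  refine le_of_tendsto Real.tendsto_eulerMascheroniSeq ?_
  filter_upwards [Filter.eventually_ge_atTop m] with k hk
  have h1 : Real.eulerMascheroniSeq k ≤ a k := by
    have : Real.log ((k:ℝ) + 1 / 2) ≤ Real.log ((k:ℝ) + 1) := by
      apply Real.log_le_log (by positivity); linarith
    simp only [ha, Real.eulerMascheroniSeq]
    linarith
  exact h1.trans (hanti hk)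

/-- For `n` even and positive,
`Hₙ − (1/2)·H_{n/2} < (γ + log 2)/2 + log(n+1)/2`. -/
theorem harmonic_diff_bound (n : ℕ) (hn : 0 < n) (hne : Even n) :
    (harmonic n : ℝ) - (1 / 2) * (harmonic (n / 2) : ℝ) <
      (Real.eulerMascheroniConstant + Real.log 2) / 2 + Real.log (n + 1) / 2 := by
  obtain ⟨m, hm⟩ := hne
  have hm2 : n / 2 = m := by omega
  have h1 : (harmonic n : ℝ) - Real.log (n + 1) < Real.eulerMascheroniConstant :=
    Real.eulerMascheroniSeq_lt_eulerMascheroniConstant n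
  have h2 := gamma_le_harmonic_sub_log m
  have h3 : Real.log ((m:ℝ) + 1 / 2) = Real.log ((n:ℝ) + 1) - Real.log 2 := by
    have : (m:ℝ) + 1 / 2 = ((n:ℝ) + 1) / 2 := by
      have : (n:ℝ) = 2 * m := by rw [hm]; push_cast; ring
      rw [this]; ring
    rw [this, Real.log_div (by positivity) (by norm_num)]
  rw [hm2]
  rw [h3] at h2
  linarith
end

section
/- Let n be even and let s_k = cos((2k-1)π/(2n)), k = 1,...,n, be the Chebyshev nodes on [-1,1]. Let p_j be the orthonormal Chebyshev polynomials (p_0 = √(1/n)·T_0, p_j = √(2/n)·T_j for j ≥ 1) and V the n×n matrix with entries V_{kj} = p_j(s_k). Then the k-th entry of V p(0), where p(0) = (p_0(0),...,p_{n-1}(0)), equals (1/n)·(−1)^{k+n/2}·tan((2k-1)π/(2n)). -/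
/-- The `k`-th Chebyshev node on `[-1,1]` (with `k` running over `1,…,n` via `Fin n`). -/
noncomputable def chebNode (n : ℕ) (k : Fin n) : ℝ :=
  Real.cos ((2 * ((k : ℕ) + 1 : ℝ) - 1) * Real.pi / (2 * n))

/-- The orthonormal Chebyshev polynomials: `p₀ = √(1/n)·T₀`, `pⱼ = √(2/n)·Tⱼ` for `j ≥ 1`,
with `Tⱼ(x) = cos(j·arccos x)`. -/
noncomputable def chebOrtho (n j : ℕ) (x : ℝ) : ℝ :=
  if j = 0 then Real.sqrt (1 / n) else Real.sqrt (2 / n) * Real.cos (j * Real.arccos x)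

/-- The matrix `V` with entries `V_{kj} = pⱼ(sₖ)`. -/
noncomputable def chebMatrix (n : ℕ) : Matrix (Fin n) (Fin n) ℝ :=
  fun k j => chebOrtho n (j : ℕ) (chebNode n k)

lemma cos_nat_pi (m : ℕ) : Real.cos ((m:ℝ) * Real.pi) = (-1)^m := by
  simpa using Real.cos_nat_mul_pi_sub 0 m

lemma cos_odd_half (m : ℕ) : Real.cos ((2*(m:ℝ)+1) * Real.pi / 2) = 0 := by
  rw [Real.cos_eq_zero_iff]
  exact ⟨(m:ℤ), by push_cast; ring⟩

lemma sin_odd_half (m : ℕ) : Real.sin ((2*(m:ℝ)+1) * Real.pi / 2) = (-1)^m := by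
  rw [show (2*(m:ℝ)+1) * Real.pi / 2 = (m:ℝ)*Real.pi + Real.pi/2 by ring,
    Real.sin_add, Real.sin_nat_mul_pi, Real.cos_pi_div_two, Real.sin_pi_div_two, cos_nat_pi]
  ring

lemma key (θ : ℝ) (M : ℕ) :
    Real.cos θ * (∑ j ∈ Finset.range (2*M+2),
      (if j = 0 then (1:ℝ) else 2 * Real.cos (j*θ) * Real.cos ((j:ℝ)*Real.pi/2)))
    = (-1)^M * Real.cos ((2*(M:ℝ)+1)*θ) := by
  induction M with
  | zero => simp [Finset.sum_range_succ, Real.cos_pi_div_two]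
  | succ M ih =>
      have h1 : 2*(M+1)+2 = (2*M+2) + 1 + 1 := by ring
      rw [h1, Finset.sum_range_succ, Finset.sum_range_succ,
        if_neg (by omega : ¬(2*M+2=0)), if_neg (by omega : ¬(2*M+2+1=0))]
      push_cast
      have hz : Real.cos ((2*(M:ℝ)+3)*Real.pi/2) = 0 := by
        rw [Real.cos_eq_zero_iff]
        exact ⟨(M:ℤ)+1, by push_cast; ring⟩
      have hc : Real.cos ((2*(M:ℝ)+2)*Real.pi/2) = (-1)^(M+1) := by
        rw [show (2*(M:ℝ)+2)*Real.pi/2 = ((M+1:ℕ):ℝ)*Real.pi by push_cast; ring, cos_nat_pi]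
      have e1 : Real.cos ((2*(M:ℝ)+3)*θ)
          = Real.cos ((2*(M:ℝ)+2)*θ) * Real.cos θ - Real.sin ((2*(M:ℝ)+2)*θ) * Real.sin θ := by
        rw [show (2*(M:ℝ)+3)*θ = (2*(M:ℝ)+2)*θ + θ by ring, Real.cos_add]
      have e2 : Real.cos ((2*(M:ℝ)+1)*θ)
          = Real.cos ((2*(M:ℝ)+2)*θ) * Real.cos θ + Real.sin ((2*(M:ℝ)+2)*θ) * Real.sin θ := by
        rw [show (2*(M:ℝ)+1)*θ = (2*(M:ℝ)+2)*θ - θ by ring, Real.cos_sub]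
      rw [e2] at ih
      rw [show (2*((M:ℝ)+1)+1)*θ = (2*(M:ℝ)+3)*θ by ring, hz, hc, e1]
      linear_combination ih

/-- For `n` even, the `k`-th entry of `V p(0)` equals
`(1/n)·(−1)^{k+n/2}·tan((2k-1)π/(2n))`. -/
theorem chebMatrix_mulVec_at_zero (n : ℕ) (hn : 0 < n) (hne : Even n) (k : Fin n) :
    (chebMatrix n).mulVec (fun j : Fin n => chebOrtho n (j : ℕ) 0) k =
      (1 / n) * (-1) ^ ((k : ℕ) + 1 + n / 2) *
        Real.tan ((2 * ((k : ℕ) + 1 : ℝ) - 1) * Real.pi / (2 * n)) := by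
  obtain ⟨m, hm⟩ := hne
  have hm1 : 1 ≤ m := by omega
  obtain ⟨M, hM⟩ : ∃ M, m = M + 1 := ⟨m - 1, by omega⟩
  have hnR : (0:ℝ) < n := by exact_mod_cast hn
  have hπ := Real.pi_pos
  set θ : ℝ := (2 * ((k : ℕ) + 1 : ℝ) - 1) * Real.pi / (2 * n) with hθdef
  have hkR : ((k:ℕ):ℝ) + 1 ≤ (n:ℝ) := by exact_mod_cast k.2
  have hk0 : (0:ℝ) ≤ ((k:ℕ):ℝ) := Nat.cast_nonneg _
  have hθ0 : 0 ≤ θ := by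
    rw [hθdef]
    apply div_nonneg _ (by positivity)
    nlinarith
  have hθπ : θ ≤ Real.pi := by
    rw [hθdef, div_le_iff₀ (by positivity)]
    nlinarith
  have harc : Real.arccos (chebNode n k) = θ := by
    rw [chebNode]; exact Real.arccos_cos hθ0 hθπ
  have hnn : n = 2*M+2 := by omega
  -- rewrite the matrix-vector product as a scalar multiple of the key sum
  have hsum : (chebMatrix n).mulVec (fun j : Fin n => chebOrtho n (j : ℕ) 0) k
      = (1/(n:ℝ)) * ∑ j ∈ Finset.range n,
          (if j = 0 then (1:ℝ) else 2 * Real.cos (j*θ) * Real.cos ((j:ℝ)*Real.pi/2)) := by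
    rw [Finset.mul_sum]
    rw [show (chebMatrix n).mulVec (fun j : Fin n => chebOrtho n (j : ℕ) 0) k
        = ∑ j : Fin n, chebOrtho n (j:ℕ) (chebNode n k) * chebOrtho n (j:ℕ) 0 from rfl]
    rw [Fin.sum_univ_eq_sum_range (fun j => chebOrtho n j (chebNode n k) * chebOrtho n j 0) n]
    refine Finset.sum_congr rfl fun j _ => ?_
    by_cases hj : j = 0
    · subst hj
      show Real.sqrt (1/(n:ℝ)) * Real.sqrt (1/(n:ℝ)) = 1/(n:ℝ) * 1
      rw [Real.mul_self_sqrt (by positivity), mul_one]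
    · simp only [chebOrtho, if_neg hj, harc, Real.arccos_zero]
      rw [show Real.sqrt (2/(n:ℝ)) * Real.cos (↑j * θ) * (Real.sqrt (2/(n:ℝ)) * Real.cos (↑j * (Real.pi/2)))
          = (Real.sqrt (2/(n:ℝ)) * Real.sqrt (2/(n:ℝ))) * (Real.cos (↑j * θ) * Real.cos (↑j * (Real.pi/2))) by ring,
        Real.mul_self_sqrt (by positivity)]
      rw [show ((j:ℝ) * (Real.pi/2)) = (j:ℝ)*Real.pi/2 by ring]
      field_simp
  have hcos_ne : Real.cos θ ≠ 0 := by
    intro h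
    obtain ⟨l, hl⟩ := Real.cos_eq_zero_iff.mp h
    rw [hθdef] at hl
    have h3 : (2*((k:ℕ):ℝ)+1) = (n:ℝ)*(2*(l:ℝ)+1) := by
      have h4 : (2 * (((k:ℕ):ℝ) + 1) - 1) * Real.pi * 2 = (2 * (l:ℝ) + 1) * Real.pi * (2*(n:ℝ)) := by
        field_simp at hl
        rw [hl]; ring
      have h5 : ((2*((k:ℕ):ℝ)+1) - (n:ℝ)*(2*(l:ℝ)+1)) * (2*Real.pi) = 0 := by ring_nf; ring_nf at h4; linarith
      have := mul_eq_zero.mp h5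
      rcases this with h6 | h6
      · linarith
      · exfalso; nlinarith
    have h4 : (2*(k:ℕ)+1 : ℤ) = (n:ℤ)*(2*l+1) := by exact_mod_cast h3
    have heven : Even ((n:ℤ)*(2*l+1)) := by
      refine Even.mul_right ⟨(m:ℤ), ?_⟩ _
      exact_mod_cast hm
    rw [← h4] at heven
    obtain ⟨t, ht⟩ := heven
    omega
  have hk' := key θ M
  rw [show 2*M+2 = n from hnn.symm] at hk'
  have hnθ : (n:ℝ)*θ = (2*((k:ℕ):ℝ)+1)*Real.pi/2 := by
    rw [hθdef]; field_simp; ring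
  have hccc : Real.cos ((2*(M:ℝ)+1)*θ) = (-1)^(k:ℕ) * Real.sin θ := by
    have h5 : (2*(M:ℝ)+1)*θ = (n:ℝ)*θ - θ := by
      have hnc : (n:ℝ) = 2*(M:ℝ)+2 := by exact_mod_cast hnn
      rw [hnc]; ring
    rw [h5, hnθ, Real.cos_sub, cos_odd_half k, sin_odd_half k]
    ring
  rw [hccc] at hk'
  have hS : (∑ j ∈ Finset.range n,
      (if j = 0 then (1:ℝ) else 2 * Real.cos (j*θ) * Real.cos ((j:ℝ)*Real.pi/2)))
      = (-1)^((k:ℕ)+M) * (Real.sin θ / Real.cos θ) := by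
    field_simp
    linear_combination hk'
  rw [hsum, hS, Real.tan_eq_sin_div_cos,
    show (k:ℕ) + 1 + n/2 = (k:ℕ) + M + 2 by omega, pow_add]
  norm_num
  ring
end

section
/- With V, p(0) as above (Chebyshev nodes on [-1,1], n even), ‖V p(0)‖_1 < (2/π)·log(n+1) + 1. -/
section ChebAux
open Real Finset



lemma aux_log_ge (x : ℝ) (hx : 0 < x) : 1 - 1/x ≤ Real.log x := by
  have h := Real.log_le_sub_one_of_pos (show (0:ℝ) < x⁻¹ by positivity)
  rw [Real.log_inv] at h
  have hx' : 1/x = x⁻¹ := one_div x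
  linarith

lemma aux_sin_cube {h : ℝ} (h0 : 0 < h) (h1 : h ≤ 1) :
    2*(h - Real.sin h) ≤ 3*h*(1 - Real.cos h) := by
  have hs : h - h^3/4 < Real.sin h := by nlinarith [Real.sin_gt_sub_cube h0, pow_pos h0 3]
  have hhalf : h/2 - (h/2)^3/4 < Real.sin (h/2) :=
    by nlinarith [Real.sin_gt_sub_cube (show 0 < h/2 by positivity), pow_pos (show 0 < h/2 by positivity) 3]
  have hcos : Real.cos h = 1 - 2*Real.sin (h/2)^2 := by
    have h2 := Real.cos_two_mul (h/2)
    rw [show 2*(h/2) = h by ring] at h2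
    nlinarith [Real.sin_sq_add_cos_sq (h/2)]
  have hh2 : h^2 ≤ 1 := by nlinarith
  have hh3 : h^3 ≤ h := by nlinarith
  have hb : 15/32*h ≤ Real.sin (h/2) := by nlinarith
  have hsq : (15/32*h)^2 ≤ Real.sin (h/2)^2 := by nlinarith
  nlinarith [hs, hsq, hcos, h0]

lemma aux_step {c h : ℝ} (hh0 : 0 < h) (hh1 : h ≤ 1) (hc0 : 0 ≤ c) (hch : c + h < Real.pi/2)
    (ht : Real.tan c ≤ 2/(3*h)) :
    h * Real.tan c ≤ Real.log (Real.cos c) - Real.log (Real.cos (c+h)) := by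
  have hπ := Real.pi_pos
  have hc2 : c < Real.pi/2 := by linarith
  have hcosc : 0 < Real.cos c := Real.cos_pos_of_mem_Ioo ⟨by linarith, hc2⟩
  have hcosch : 0 < Real.cos (c+h) := Real.cos_pos_of_mem_Ioo ⟨by linarith, hch⟩
  have ht0 : 0 ≤ Real.tan c := Real.tan_nonneg_of_nonneg_of_le_pi_div_two hc0 hc2.le
  have hexp : Real.cos (c+h) = Real.cos c * (Real.cos h - Real.tan c * Real.sin h) := by
    rw [Real.cos_add, Real.tan_eq_sin_div_cos]
    field_simp
  have hX : 0 < Real.cos h - Real.tan c * Real.sin h := by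
    rcases mul_pos_iff.mp (hexp ▸ hcosch) with ⟨_, hx⟩ | ⟨hc', _⟩
    · exact hx
    · linarith
  have hlog : Real.log (Real.cos (c+h))
      = Real.log (Real.cos c) + Real.log (Real.cos h - Real.tan c * Real.sin h) := by
    rw [hexp, Real.log_mul hcosc.ne' hX.ne']
  rw [hlog]
  have hlogX := Real.log_le_sub_one_of_pos hX
  have hsin : Real.sin h ≤ h := Real.sin_le hh0.le
  have hcube : 2*(h - Real.sin h) ≤ 3*h*(1 - Real.cos h) := aux_sin_cube hh0 hh1
  have h1' : Real.tan c * (h - Real.sin h) ≤ (2/(3*h))*(h - Real.sin h) :=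
    mul_le_mul_of_nonneg_right ht (by linarith)
  have h2' : (2/(3*h))*(h - Real.sin h) ≤ 1 - Real.cos h := by
    rw [div_mul_eq_mul_div, div_le_iff₀ (by positivity)]
    nlinarith
  nlinarith [hlogX, h1', h2']



lemma aux_cot_le' {x : ℝ} (h1 : 0 < x) (h2 : x < Real.pi/2) :
    Real.tan (Real.pi/2 - x) ≤ x⁻¹ := by
  rw [Real.tan_pi_div_two_sub]
  exact inv_anti₀ h1 (Real.lt_tan h1 h2).le

lemma tan_sum_bound (m : ℕ) (hm : 1 ≤ m) :
    ∑ j ∈ Finset.range m, Real.tan ((2*(j:ℝ)+1)*Real.pi/(4*(m:ℝ)))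
      ≤ (2*(m:ℝ)/Real.pi) * Real.log (4*(m:ℝ)/Real.pi) + 4*(m:ℝ)/Real.pi := by
  have hπ := Real.pi_pos
  obtain ⟨M, rfl⟩ : ∃ M, m = M + 1 := ⟨m-1, by omega⟩
  set mr : ℝ := ((M+1:ℕ):ℝ) with hmr
  have hmr1 : (1:ℝ) ≤ mr := by rw [hmr]; exact_mod_cast Nat.one_le_iff_ne_zero.mpr (by omega)
  have hmrpos : (0:ℝ) < mr := by linarith
  rw [Finset.sum_range_succ]
  -- the largest (last) tangent
  have hlast : Real.tan ((2*((M:ℕ):ℝ)+1)*Real.pi/(4*mr)) ≤ 4*mr/Real.pi := by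
    have e : (2*((M:ℕ):ℝ)+1)*Real.pi/(4*mr) = Real.pi/2 - Real.pi/(4*mr) := by
      rw [hmr]; push_cast; field_simp; ring
    have hx0 : 0 < Real.pi/(4*mr) := by positivity
    have hx2 : Real.pi/(4*mr) < Real.pi/2 :=
      div_lt_div_of_pos_left hπ (by norm_num) (by linarith)
    rw [e]
    calc Real.tan (Real.pi/2 - Real.pi/(4*mr)) ≤ (Real.pi/(4*mr))⁻¹ := aux_cot_le' hx0 hx2
      _ = 4*mr/Real.pi := by rw [inv_div]
  -- the telescoping bound for the others
  set F : ℕ → ℝ := fun j => Real.log (Real.cos ((2*(j:ℝ)+1)*Real.pi/(4*mr))) with hF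
  have hper : ∀ j ∈ Finset.range M,
      Real.tan ((2*(j:ℝ)+1)*Real.pi/(4*mr)) ≤ (2*mr/Real.pi) * (F j - F (j+1)) := by
    intro j hj
    have hjM : j < M := Finset.mem_range.mp hj
    have hj2 : (j:ℝ) + 1 ≤ (M:ℝ) := by exact_mod_cast hjM
    have hmr2 : (2:ℝ) ≤ mr := by
      rw [hmr]; exact_mod_cast (by omega : 2 ≤ M+1)
    set c : ℝ := (2*(j:ℝ)+1)*Real.pi/(4*mr) with hc
    set h : ℝ := Real.pi/(2*mr) with hh
    have hMcast : (M:ℝ) = mr - 1 := by rw [hmr]; push_cast; ring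
    have hh0 : 0 < h := by rw [hh]; positivity
    have hh1 : h ≤ 1 := by
      rw [hh, div_le_one (by linarith)]
      linarith [Real.pi_lt_d2]
    have hc0 : 0 ≤ c := by rw [hc]; positivity
    have hch : c + h < Real.pi/2 := by
      rw [hc, hh]
      have e : (2*(j:ℝ)+1)*Real.pi/(4*mr) + Real.pi/(2*mr) = (2*(j:ℝ)+3)*Real.pi/(4*mr) := by
        field_simp; ring
      rw [e, div_lt_div_iff₀ (by positivity) (by norm_num : (0:ℝ) < 2)]
      have : (2*(j:ℝ)+3) < 2*mr := by rw [hMcast] at hj2; linarith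
      nlinarith
    have ht : Real.tan c ≤ 2/(3*h) := by
      set x : ℝ := (2*((M:ℝ)-(j:ℝ))+1)*Real.pi/(4*mr) with hx
      have hx0 : 0 < x := by
        rw [hx]; have : 0 < 2*((M:ℝ)-(j:ℝ))+1 := by nlinarith
        positivity
      have hx2 : x < Real.pi/2 := by
        rw [hx, div_lt_div_iff₀ (by positivity) (by norm_num : (0:ℝ) < 2)]
        have : 2*((M:ℝ)-(j:ℝ))+1 < 2*mr := by rw [hMcast]; nlinarith
        nlinarith
      have hcx : c = Real.pi/2 - x := by
        rw [hc, hx, hMcast]; field_simp; ring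
      have hx3 : 3*Real.pi/(4*mr) ≤ x := by
        rw [hx, div_le_div_iff₀ (by positivity) (by positivity)]
        have h3 : (3:ℝ) ≤ 2*((M:ℝ)-(j:ℝ))+1 := by linarith
        exact mul_le_mul_of_nonneg_right (mul_le_mul_of_nonneg_right h3 hπ.le) (by positivity)
      rw [hcx]
      calc Real.tan (Real.pi/2 - x) ≤ x⁻¹ := aux_cot_le' hx0 hx2
        _ ≤ (3*Real.pi/(4*mr))⁻¹ := inv_anti₀ (by positivity) hx3
        _ = 2/(3*h) := by rw [hh]; field_simp; ring
    have step := aux_step hh0 hh1 hc0 hch ht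
    have hcosch : Real.cos (c+h) = Real.cos ((2*((j+1:ℕ):ℝ)+1)*Real.pi/(4*mr)) := by
      congr 1
      rw [hc, hh]; push_cast; field_simp; ring
    have hrec : (2*mr/Real.pi) * (Real.pi/(2*mr)) = 1 := by field_simp
    calc Real.tan c = (2*mr/Real.pi)*(Real.pi/(2*mr)) * Real.tan c := by rw [hrec, one_mul]
      _ = (2*mr/Real.pi)*(h * Real.tan c) := by rw [hh]; ring
      _ ≤ (2*mr/Real.pi)*(F j - F (j+1)) := by
          apply mul_le_mul_of_nonneg_left _ (by positivity)
          rw [hF]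
          simp only []
          rw [← hcosch]
          exact step
  have hmain : ∑ j ∈ Finset.range M, Real.tan ((2*(j:ℝ)+1)*Real.pi/(4*mr))
      ≤ (2*mr/Real.pi) * Real.log (4*mr/Real.pi) := by
    have hx0 : 0 < Real.pi/(4*mr) := by positivity
    have hx2 : Real.pi/(4*mr) < Real.pi/2 :=
      div_lt_div_of_pos_left hπ (by norm_num) (by linarith)
    have hsinpos : 0 < Real.sin (Real.pi/(4*mr)) :=
      Real.sin_pos_of_pos_of_lt_pi hx0 (by linarith)
    have hcospos : 0 < Real.cos (Real.pi/(4*mr)) :=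
      Real.cos_pos_of_mem_Ioo ⟨by linarith, hx2⟩
    calc ∑ j ∈ Finset.range M, Real.tan ((2*(j:ℝ)+1)*Real.pi/(4*mr))
        ≤ ∑ j ∈ Finset.range M, (2*mr/Real.pi) * (F j - F (j+1)) := Finset.sum_le_sum hper
      _ = (2*mr/Real.pi) * (F 0 - F M) := by rw [← Finset.mul_sum, Finset.sum_range_sub' F M]
      _ ≤ (2*mr/Real.pi) * Real.log (4*mr/Real.pi) := by
          apply mul_le_mul_of_nonneg_left _ (by positivity)
          have e0 : F 0 = Real.log (Real.cos (Real.pi/(4*mr))) := by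
            rw [hF]; norm_num
          have eM : F M = Real.log (Real.sin (Real.pi/(4*mr))) := by
            rw [hF]
            simp only []
            rw [show (2*((M:ℕ):ℝ)+1)*Real.pi/(4*mr) = Real.pi/2 - Real.pi/(4*mr) by
              rw [hmr]; push_cast; field_simp; ring]
            rw [Real.cos_pi_div_two_sub]
          rw [e0, eM, ← Real.log_div hcospos.ne' hsinpos.ne']
          apply Real.log_le_log (by positivity)
          have e1 : Real.cos (Real.pi/(4*mr)) / Real.sin (Real.pi/(4*mr))
              = Real.tan (Real.pi/2 - Real.pi/(4*mr)) := by
            rw [Real.tan_pi_div_two_sub, Real.tan_eq_sin_div_cos, inv_div]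
          rw [e1]
          calc Real.tan (Real.pi/2 - Real.pi/(4*mr)) ≤ (Real.pi/(4*mr))⁻¹ :=
                aux_cot_le' hx0 hx2
            _ = 4*mr/Real.pi := by rw [inv_div]
  linarith [hmain, hlast]

lemma final_num (m : ℕ) (hm : 1 ≤ m) :
    (2/Real.pi) * Real.log (4*(m:ℝ)/Real.pi) + 4/Real.pi
      < (2/Real.pi) * Real.log (2*(m:ℝ)+1) + 1 := by
  have hπ := Real.pi_pos
  have hm0 : (1:ℝ) ≤ (m:ℝ) := by exact_mod_cast hm
  have h1 : Real.log (4*(m:ℝ)/Real.pi) < Real.log ((2/Real.pi)*(2*(m:ℝ)+1)) := by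
    apply Real.log_lt_log (by positivity)
    rw [show (2/Real.pi)*(2*(m:ℝ)+1) = (2*(2*(m:ℝ)+1))/Real.pi by ring]
    rw [div_lt_div_iff_of_pos_right hπ]
    linarith
  have h2 : Real.log ((2/Real.pi)*(2*(m:ℝ)+1))
      = Real.log (2/Real.pi) + Real.log (2*(m:ℝ)+1) :=
    Real.log_mul (by positivity) (by positivity)
  have h3 : Real.log (2/Real.pi) = - Real.log (Real.pi/2) := by
    rw [show (2:ℝ)/Real.pi = (Real.pi/2)⁻¹ by rw [inv_div], Real.log_inv]
  have h4 : (0.8823:ℝ) ≤ 2 * Real.log (Real.pi/2) := by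
    have e : Real.log ((Real.pi/2)^2) = 2 * Real.log (Real.pi/2) := by
      rw [Real.log_pow]; push_cast; ring
    have hsq : (2.467:ℝ) ≤ (Real.pi/2)^2 := by nlinarith [Real.pi_gt_d6]
    have l1 : Real.log (2.467:ℝ) ≤ Real.log ((Real.pi/2)^2) :=
      Real.log_le_log (by norm_num) hsq
    have l2 : Real.log (2.467:ℝ) = Real.log 2 + Real.log 1.2335 := by
      rw [← Real.log_mul (by norm_num) (by norm_num)]; norm_num
    have l3 : (0.1892:ℝ) ≤ Real.log (1.2335:ℝ) := by
      have := aux_log_ge (1.2335:ℝ) (by norm_num)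
      have hn : (1:ℝ)/1.2335 ≤ 0.8108 := by norm_num
      linarith
    have l4 := Real.log_two_gt_d9
    linarith
  have hmul := mul_lt_mul_of_pos_left h1 (show (0:ℝ) < 2/Real.pi by positivity)
  rw [h2, h3, mul_add] at hmul
  have h7 : -((2/Real.pi)*Real.log (Real.pi/2)) + 4/Real.pi ≤ 1 := by
    have h6 : 4 - 2*Real.log (Real.pi/2) ≤ Real.pi := by
      nlinarith [Real.pi_gt_d6]
    have e : -((2/Real.pi)*Real.log (Real.pi/2)) + 4/Real.pi
        = (4 - 2*Real.log (Real.pi/2))/Real.pi := by ring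
    rw [e, div_le_one hπ]; exact h6
  nlinarith [hmul, h7]

lemma tele_id (θ y : ℝ) :
    2 * Real.cos θ * (Real.cos ((y+1)*θ) * Real.cos ((y+1)*(Real.pi/2)))
      = (Real.cos ((y+1+1)*θ) * Real.cos ((y+1)*(Real.pi/2))
          - Real.cos ((y+1)*θ) * Real.cos ((y+1+1)*(Real.pi/2)))
        - (Real.cos ((y+1)*θ) * Real.cos (y*(Real.pi/2))
          - Real.cos (y*θ) * Real.cos ((y+1)*(Real.pi/2))) := by
  have e1 : (y+1+1)*θ = (y+1)*θ + θ := by ring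
  have e2 : (y+1+1)*(Real.pi/2) = (y+1)*(Real.pi/2) + Real.pi/2 := by ring
  have e3 : y*θ = (y+1)*θ - θ := by ring
  have e4 : y*(Real.pi/2) = (y+1)*(Real.pi/2) - Real.pi/2 := by ring
  rw [e1, e2, e3, e4, Real.cos_add, Real.cos_add, Real.cos_sub, Real.cos_sub,
    Real.cos_pi_div_two, Real.sin_pi_div_two]
  ring

lemma entry_abs (n m : ℕ) (hnm : n = m + m) (hm : 0 < m) (k : Fin n) :
    |(chebMatrix n).mulVec (fun j : Fin n => chebOrtho n (j:ℕ) 0) k|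
      = |Real.tan ((2*((k:ℕ):ℝ)+1)*Real.pi/(2*((n:ℕ):ℝ)))| / ((n:ℕ):ℝ) := by
  have hπ := Real.pi_pos
  have hn1 : 1 ≤ n := by omega
  have hn0 : (0:ℝ) < (n:ℝ) := by exact_mod_cast Nat.pos_of_ne_zero (by omega)
  set θ : ℝ := (2*((k:ℕ):ℝ)+1)*Real.pi/(2*((n:ℕ):ℝ)) with hθ
  have hkr : ((k:ℕ):ℝ) + 1 ≤ (n:ℝ) := by exact_mod_cast k.isLt
  have hk0 : (0:ℝ) ≤ ((k:ℕ):ℝ) := by positivity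
  have hθ0 : 0 < θ := by rw [hθ]; positivity
  have hθπ : θ < Real.pi := by
    rw [hθ, div_lt_iff₀ (by positivity)]
    nlinarith
  have hnode : chebNode n k = Real.cos θ := by
    unfold chebNode
    congr 1
    rw [hθ]; push_cast; ring
  set E : ℝ := (chebMatrix n).mulVec (fun j : Fin n => chebOrtho n (j:ℕ) 0) k with hE
  have hEsum : E = ∑ j ∈ Finset.range n, (chebOrtho n j (chebNode n k) * chebOrtho n j 0) := by
    rw [hE, show (chebMatrix n).mulVec (fun j : Fin n => chebOrtho n (j:ℕ) 0) k
        = ∑ j : Fin n, chebOrtho n (j:ℕ) (chebNode n k) * chebOrtho n (j:ℕ) 0 by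
      simp [Matrix.mulVec, dotProduct, chebMatrix]]
    exact Fin.sum_univ_eq_sum_range (fun j => chebOrtho n j (chebNode n k) * chebOrtho n j 0) n
  obtain ⟨N, hN⟩ : ∃ N, n = N + 1 := ⟨n - 1, by omega⟩
  have hsum2 : E = (∑ i ∈ Finset.range N,
      (2/(n:ℝ)) * (Real.cos (((i:ℝ)+1)*θ) * Real.cos (((i:ℝ)+1)*(Real.pi/2)))) + 1/(n:ℝ) := by
    rw [hEsum, show Finset.range n = Finset.range (N+1) by rw [hN], Finset.sum_range_succ']
    congr 1
    · apply Finset.sum_congr rfl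
      intro i _
      unfold chebOrtho
      rw [if_neg (Nat.succ_ne_zero i), if_neg (Nat.succ_ne_zero i)]
      rw [hnode, Real.arccos_cos hθ0.le hθπ.le, Real.arccos_zero]
      rw [mul_mul_mul_comm, Real.mul_self_sqrt (by positivity)]
      push_cast; ring
    · unfold chebOrtho
      rw [if_pos rfl, if_pos rfl, Real.mul_self_sqrt (by positivity)]
  set H : ℕ → ℝ := fun i => Real.cos (((i:ℝ)+1)*θ)*Real.cos ((i:ℝ)*(Real.pi/2))
      - Real.cos ((i:ℝ)*θ)*Real.cos (((i:ℝ)+1)*(Real.pi/2)) with hH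
  have hkey : (n:ℝ) * Real.cos θ * E
      = -(Real.cos (((k:ℕ):ℝ)*Real.pi) * Real.cos ((m:ℝ)*Real.pi) * Real.sin θ) := by
    rw [hsum2, mul_add, Finset.mul_sum]
    have hterm : ∀ i ∈ Finset.range N,
        (n:ℝ)*Real.cos θ*((2/(n:ℝ))*(Real.cos (((i:ℝ)+1)*θ) * Real.cos (((i:ℝ)+1)*(Real.pi/2))))
          = H (i+1) - H i := by
      intro i _
      have e : (n:ℝ)*Real.cos θ*((2/(n:ℝ))*(Real.cos (((i:ℝ)+1)*θ) * Real.cos (((i:ℝ)+1)*(Real.pi/2))))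
          = 2*Real.cos θ*(Real.cos (((i:ℝ)+1)*θ) * Real.cos (((i:ℝ)+1)*(Real.pi/2))) := by
        field_simp
      rw [e, hH]
      push_cast
      exact tele_id θ (i:ℝ)
    rw [Finset.sum_congr rfl hterm, Finset.sum_range_sub H]
    have hH0 : H 0 = Real.cos θ := by
      rw [hH]; simp
    have hnθ : (n:ℝ)*θ = ((k:ℕ):ℝ)*Real.pi + Real.pi/2 := by
      rw [hθ]; field_simp
    have hcosnθ : Real.cos ((n:ℝ)*θ) = 0 := by
      rw [hnθ, Real.cos_add, Real.cos_pi_div_two, Real.sin_pi_div_two, Real.sin_nat_mul_pi]; ring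
    have hsinnθ : Real.sin ((n:ℝ)*θ) = Real.cos (((k:ℕ):ℝ)*Real.pi) := by
      rw [hnθ, Real.sin_add, Real.cos_pi_div_two, Real.sin_pi_div_two, Real.sin_nat_mul_pi]; ring
    have hnpi2 : (n:ℝ)*(Real.pi/2) = (m:ℝ)*Real.pi := by
      rw [hnm]; push_cast; ring
    have hNr : ((N:ℕ):ℝ) = (n:ℝ) - 1 := by
      have : ((n:ℕ):ℝ) = ((N:ℕ):ℝ) + 1 := by rw [hN]; push_cast; ring
      linarith
    have hHN : H N = -(Real.cos (((k:ℕ):ℝ)*Real.pi) * Real.cos ((m:ℝ)*Real.pi) * Real.sin θ) := by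
      rw [hH]
      simp only []
      rw [hNr, show ((n:ℝ)-1+1) = (n:ℝ) by ring,
        show ((n:ℝ)-1)*θ = (n:ℝ)*θ - θ by ring,
        show ((n:ℝ)-1)*(Real.pi/2) = (n:ℝ)*(Real.pi/2) - Real.pi/2 by ring,
        Real.cos_sub, Real.cos_sub, hcosnθ, hsinnθ, hnpi2,
        Real.cos_pi_div_two, Real.sin_pi_div_two, Real.sin_nat_mul_pi]
      ring
    rw [hH0, hHN]
    have e2 : (n:ℝ)*Real.cos θ*(1/(n:ℝ)) = Real.cos θ := by field_simp
    rw [e2]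
    ring
  have hcos_ne : Real.cos θ ≠ 0 := by
    intro hcc
    rw [Real.cos_eq_zero_iff] at hcc
    obtain ⟨ℓ, hℓ⟩ := hcc
    rw [hθ, div_eq_div_iff (by positivity) (by norm_num : (2:ℝ) ≠ 0)] at hℓ
    have h4 : ((2*((k:ℕ):ℝ)+1)*2) * Real.pi = ((2*(ℓ:ℝ)+1)*(2*((n:ℕ):ℝ))) * Real.pi := by
      linear_combination hℓ
    have h4' := mul_right_cancel₀ Real.pi_ne_zero h4
    have h5 : (2*((k:ℕ):ℤ)+1)*2 = (2*ℓ+1)*(2*((n:ℕ):ℤ)) := by exact_mod_cast h4'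
    have h6 : (n:ℤ) = (m:ℤ) + (m:ℤ) := by exact_mod_cast hnm
    obtain ⟨q, hq⟩ : ∃ q : ℤ, ℓ*((n:ℕ):ℤ) = q := ⟨_, rfl⟩
    have h7 : (2*((k:ℕ):ℤ)+1)*2 = 4*q + 2*((n:ℕ):ℤ) := by
      rw [← hq]; linear_combination h5
    omega
  have hsin0 : 0 ≤ Real.sin θ := Real.sin_nonneg_of_nonneg_of_le_pi hθ0.le hθπ.le
  have h1 : |(n:ℝ)| * |Real.cos θ| * |E| = Real.sin θ := by
    rw [← abs_mul, ← abs_mul, hkey, abs_neg, abs_mul, abs_mul]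
    rw [show ((k:ℕ):ℝ)*Real.pi = (((k:ℕ):ℤ):ℝ)*Real.pi by push_cast; ring,
      Real.abs_cos_int_mul_pi]
    rw [show (m:ℝ)*Real.pi = ((m:ℤ):ℝ)*Real.pi by push_cast; ring,
      Real.abs_cos_int_mul_pi]
    rw [abs_of_nonneg hsin0]
    ring
  rw [abs_of_nonneg hn0.le] at h1
  rw [Real.tan_eq_sin_div_cos, abs_div, abs_of_nonneg hsin0, div_div]
  have hcosabs : 0 < |Real.cos θ| := abs_pos.mpr hcos_ne
  rw [eq_div_iff (by positivity)]
  linarith [h1]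

end ChebAux

open Real Finset in
/-- For `n` even, `‖V p(0)‖₁ < (2/π)·log(n+1) + 1`. -/
theorem chebMatrix_mulVec_one_norm (n : ℕ) (hn : 0 < n) (hne : Even n) :
    ∑ k, |(chebMatrix n).mulVec (fun j : Fin n => chebOrtho n (j : ℕ) 0) k| <
      (2 / Real.pi) * Real.log (n + 1) + 1 := by
  obtain ⟨m, hnm⟩ := hne
  have hm : 0 < m := by omega
  have hm1 : (1:ℝ) ≤ (m:ℝ) := by exact_mod_cast hm
  have hπ := Real.pi_pos
  have hn0 : (0:ℝ) < (n:ℝ) := by exact_mod_cast hn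
  set G : ℕ → ℝ := fun k => |Real.tan ((2*(k:ℝ)+1)*Real.pi/(2*((n:ℕ):ℝ)))| with hG
  have h1 : ∑ k, |(chebMatrix n).mulVec (fun j : Fin n => chebOrtho n (j : ℕ) 0) k|
      = (∑ k ∈ Finset.range n, G k) / (n:ℝ) := by
    rw [Finset.sum_congr rfl (fun k _ => entry_abs n m hnm hm k), ← Finset.sum_div]
    congr 1
    exact Fin.sum_univ_eq_sum_range (fun k => |Real.tan ((2*(k:ℝ)+1)*Real.pi/(2*((n:ℕ):ℝ)))|) n
  have hsplit : ∑ k ∈ Finset.range n, G k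
      = ∑ k ∈ Finset.range m, G k + ∑ i ∈ Finset.range m, G (m+i) := by
    rw [Finset.range_eq_Ico,
      ← Finset.sum_Ico_consecutive G (Nat.zero_le m) (by omega : m ≤ n),
      Nat.Ico_zero_eq_range, Finset.sum_Ico_eq_sum_range]
    have e : n - m = m := by omega
    rw [e]
  have hrefl : ∑ i ∈ Finset.range m, G (m+i) = ∑ i ∈ Finset.range m, G i := by
    rw [← Finset.sum_range_reflect (fun i => G (m+i)) m]
    apply Finset.sum_congr rfl
    intro j hj
    have hjm : j < m := Finset.mem_range.mp hj
    have hcast : ((m + (m-1-j) : ℕ):ℝ) = 2*(m:ℝ) - 1 - (j:ℝ) := by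
      have e : m + (m - 1 - j) + (j+1) = 2*m := by omega
      have := congrArg (Nat.cast : ℕ → ℝ) e
      push_cast at this ⊢
      linarith
    rw [hG]
    simp only []
    rw [hcast]
    have hnr : ((n:ℕ):ℝ) = 2*(m:ℝ) := by rw [hnm]; push_cast; ring
    have eang : (2*(2*(m:ℝ) - 1 - (j:ℝ))+1)*Real.pi/(2*((n:ℕ):ℝ))
        = Real.pi - (2*(j:ℝ)+1)*Real.pi/(2*((n:ℕ):ℝ)) := by
      rw [hnr]; field_simp; ring
    rw [eang, Real.tan_pi_sub, abs_neg]
  have habs : ∀ j ∈ Finset.range m, G j = Real.tan ((2*(j:ℝ)+1)*Real.pi/(4*(m:ℝ))) := by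
    intro j hj
    have hjm : j < m := Finset.mem_range.mp hj
    have hj2 : (j:ℝ)+1 ≤ (m:ℝ) := by exact_mod_cast hjm
    have hnr : ((n:ℕ):ℝ) = 2*(m:ℝ) := by rw [hnm]; push_cast; ring
    have eang : (2*(j:ℝ)+1)*Real.pi/(2*((n:ℕ):ℝ)) = (2*(j:ℝ)+1)*Real.pi/(4*(m:ℝ)) := by
      rw [hnr]; ring_nf
    rw [hG]
    simp only []
    rw [eang]
    apply abs_of_nonneg
    apply Real.tan_nonneg_of_nonneg_of_le_pi_div_two (by positivity)
    rw [div_le_div_iff₀ (by positivity) (by norm_num : (0:ℝ) < 2)]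
    nlinarith
  rw [h1, hsplit, hrefl, Finset.sum_congr rfl habs]
  have hSb := tan_sum_bound m hm
  have hnr : ((n:ℕ):ℝ) = 2*(m:ℝ) := by rw [hnm]; push_cast; ring
  have hm0 : (0:ℝ) < (m:ℝ) := by linarith
  have e3 : (∑ j ∈ Finset.range m, Real.tan ((2*(j:ℝ)+1)*Real.pi/(4*(m:ℝ)))
      + ∑ j ∈ Finset.range m, Real.tan ((2*(j:ℝ)+1)*Real.pi/(4*(m:ℝ)))) / (n:ℝ)
      = (∑ j ∈ Finset.range m, Real.tan ((2*(j:ℝ)+1)*Real.pi/(4*(m:ℝ)))) / (m:ℝ) := by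
    rw [hnr, ← two_mul, mul_div_mul_left _ _ (two_ne_zero)]
  rw [e3]
  have e6 : ((n:ℕ):ℝ) + 1 = 2*(m:ℝ)+1 := by rw [hnr]
  rw [e6]
  have e4 : (∑ j ∈ Finset.range m, Real.tan ((2*(j:ℝ)+1)*Real.pi/(4*(m:ℝ)))) / (m:ℝ)
      ≤ ((2*(m:ℝ)/Real.pi) * Real.log (4*(m:ℝ)/Real.pi) + 4*(m:ℝ)/Real.pi)/(m:ℝ) := by
    have := mul_le_mul_of_nonneg_right hSb (show (0:ℝ) ≤ ((m:ℝ))⁻¹ by positivity)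
    simpa [div_eq_mul_inv] using this
  have e5 : ((2*(m:ℝ)/Real.pi) * Real.log (4*(m:ℝ)/Real.pi) + 4*(m:ℝ)/Real.pi)/(m:ℝ)
      = (2/Real.pi) * Real.log (4*(m:ℝ)/Real.pi) + 4/Real.pi := by
    field_simp
  calc (∑ j ∈ Finset.range m, Real.tan ((2*(j:ℝ)+1)*Real.pi/(4*(m:ℝ)))) / (m:ℝ)
      ≤ (2/Real.pi) * Real.log (4*(m:ℝ)/Real.pi) + 4/Real.pi := by rw [← e5]; exact e4
    _ < (2/Real.pi) * Real.log (2*(m:ℝ)+1) + 1 := final_num m hm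
end

section
/- Let A be a normal complex matrix with eigenvalues λ_1,...,λ_n, and let λ be an eigenvalue of an arbitrary matrix B of the same size. Then there exists an index k such that |λ − λ_k| ≤ ‖B − A‖, where ‖·‖ is the operator (spectral) norm. -/
private lemma bf_normal_scalar_sub {𝔸 : Type*} [CStarAlgebra 𝔸] (r : ℂ) (a : 𝔸)
    (ha : IsStarNormal a) : IsStarNormal (algebraMap ℂ 𝔸 r - a) := by
  constructor
  rw [star_sub, ← algebraMap_star_comm]
  exact Commute.sub_left
    (Commute.sub_right (Algebra.commute_algebraMap_left _ _)
      (Algebra.commute_algebraMap_left _ _))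
    (Commute.sub_right ((Algebra.commute_algebraMap_left _ _).symm) ha.star_comm_self)

/-- Abstract core of the Bauer–Fike theorem in a unital C*-algebra. -/
private lemma bf_core {𝔸 : Type*} [CStarAlgebra 𝔸] (a b : 𝔸)
    (ha : IsStarNormal a) (lam : ℂ) (hlam : lam ∈ spectrum ℂ b) (m : ℝ) (hm0 : 0 < m)
    (hspec : ∀ z ∈ spectrum ℂ a, m ≤ ‖lam - z‖) (hab : ‖b - a‖ < m) : False := by
  set c : 𝔸 := algebraMap ℂ 𝔸 lam - a with hc
  have hc_normal : IsStarNormal c := bf_normal_scalar_sub lam a ha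
  have hspecc : ∀ z ∈ spectrum ℂ c, m ≤ ‖z‖ := by
    intro z hz
    rw [hc, ← spectrum.singleton_sub_eq] at hz
    obtain ⟨x, hx, y, hy, hxy⟩ := Set.mem_sub.mp hz
    rw [Set.mem_singleton_iff] at hx
    rw [← hxy, hx]
    exact hspec y hy
  have hc_unit : IsUnit c := by
    apply spectrum.isUnit_of_zero_notMem (R := ℂ)
    intro h0
    have h1 := hspecc 0 h0
    rw [norm_zero] at h1
    exact absurd (lt_of_lt_of_le hm0 h1) (lt_irrefl 0)
  obtain ⟨u, hu⟩ := hc_unit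
  -- u⁻¹ is normal
  have hcomm_u : Commute ((star u : 𝔸ˣ) : 𝔸) ((u : 𝔸ˣ) : 𝔸) := by
    rw [Units.coe_star, hu]; exact hc_normal.star_comm_self
  have hinv_normal : IsStarNormal ((↑u⁻¹ : 𝔸)) := by
    constructor
    have h1 : Commute ((star u : 𝔸ˣ) : 𝔸) ((↑u⁻¹ : 𝔸)) := hcomm_u.units_inv_right
    have h2 : Commute ((↑(star u)⁻¹ : 𝔸)) ((↑u⁻¹ : 𝔸)) := h1.units_inv_left
    rwa [Units.coe_star_inv] at h2
  haveI := hinv_normal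
  -- spectrum bound for u⁻¹
  have hsp_inv : ∀ z ∈ spectrum ℂ ((↑u⁻¹ : 𝔸)), ‖z‖ ≤ 1 / m := by
    intro z hz
    have hz0 : z ≠ 0 := by
      intro h
      rw [h] at hz
      exact (spectrum.zero_notMem_iff ℂ).mpr (u⁻¹).isUnit hz
    have hzi : (z⁻¹ : ℂ) ∈ spectrum ℂ ((u : 𝔸ˣ) : 𝔸) := by
      apply (spectrum.inv_mem_iff (r := Units.mk0 z⁻¹ (inv_ne_zero hz0)) (a := u)).mpr
      simpa using hz
    rw [hu] at hzi
    have h2 := hspecc _ hzi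
    rw [norm_inv] at h2
    rw [one_div]
    have := inv_anti₀ hm0 h2
    rwa [inv_inv] at this
  -- norm bound on u⁻¹ via the spectral radius
  have hnorm_inv : ‖(↑u⁻¹ : 𝔸)‖ ≤ 1 / m := by
    have h1 : spectralRadius ℂ ((↑u⁻¹ : 𝔸)) = ‖(↑u⁻¹ : 𝔸)‖₊ :=
      IsStarNormal.spectralRadius_eq_nnnorm _
    have h2 : spectralRadius ℂ ((↑u⁻¹ : 𝔸)) ≤ ENNReal.ofReal (1 / m) := by
      rw [spectralRadius]
      apply iSup₂_le
      intro z hz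
      rw [← ENNReal.ofReal_coe_nnreal, coe_nnnorm]
      exact ENNReal.ofReal_le_ofReal (hsp_inv z hz)
    rw [h1, ← ENNReal.ofReal_coe_nnreal, coe_nnnorm] at h2
    exact (ENNReal.ofReal_le_ofReal_iff (by positivity)).mp h2
  -- key factorization
  set x : 𝔸 := (b - a) * (↑u⁻¹ : 𝔸) with hx
  have hxlt : ‖x‖ < 1 := by
    calc ‖x‖ ≤ ‖b - a‖ * ‖(↑u⁻¹ : 𝔸)‖ := norm_mul_le _ _
    _ ≤ ‖b - a‖ * (1 / m) := mul_le_mul_of_nonneg_left hnorm_inv (norm_nonneg _)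
    _ < m * (1 / m) := by
        apply mul_lt_mul_of_pos_right hab
        positivity
    _ = 1 := by field_simp
  have hkey : algebraMap ℂ 𝔸 lam - b = ((1 : 𝔸) - x) * ((u : 𝔸ˣ) : 𝔸) := by
    rw [sub_mul, one_mul, hx, mul_assoc, Units.inv_mul, mul_one, hu, hc]
    abel
  have hunit : IsUnit (algebraMap ℂ 𝔸 lam - b) := by
    rw [hkey]
    exact ((Units.oneSub x hxlt).isUnit).mul u.isUnit
  exact (spectrum.mem_iff.mp hlam) hunit

open Polynomial in
private lemma bf_spec_char {n : ℕ} (A : Matrix (Fin n) (Fin n) ℂ) (μ : Fin n → ℂ)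
    (hμ : A.charpoly = ∏ i, (Polynomial.X - Polynomial.C (μ i)))
    (z : ℂ) (hz : z ∈ spectrum ℂ A) : ∃ k, z = μ k := by
  classical
  have h1 : ¬ IsUnit (algebraMap ℂ (Matrix (Fin n) (Fin n) ℂ) z - A) := spectrum.mem_iff.mp hz
  have hdet : (algebraMap ℂ (Matrix (Fin n) (Fin n) ℂ) z - A).det = 0 := by
    by_contra h
    exact h1 ((Matrix.isUnit_iff_isUnit_det _).mpr (isUnit_iff_ne_zero.mpr h))
  have heval : (A.charpoly).eval z = (algebraMap ℂ (Matrix (Fin n) (Fin n) ℂ) z - A).det := by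
    rw [Matrix.charpoly, ← Polynomial.coe_evalRingHom, RingHom.map_det]
    congr 1
    ext i j
    by_cases h : i = j <;>
      simp [h, Matrix.charmatrix_apply, Matrix.algebraMap_matrix_apply, Matrix.diagonal]
  rw [hμ] at heval
  have h0 : (∏ i, (X - C (μ i))).eval z = 0 := heval.trans hdet
  rw [Polynomial.eval_prod] at h0
  obtain ⟨k, -, hk⟩ := Finset.prod_eq_zero_iff.mp h0
  simp only [Polynomial.eval_sub, Polynomial.eval_X, Polynomial.eval_C, sub_eq_zero] at hk
  exact ⟨k, hk⟩

set_option maxHeartbeats 1000000 in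
/-- Bauer–Fike theorem for normal matrices: if `A` is normal with eigenvalues `μ₁,…,μₙ`
and `λ` is an eigenvalue of `B`, then `|λ − μₖ| ≤ ‖B − A‖` for some `k`, where `‖·‖` is the
spectral (operator) norm. -/
theorem bauer_fike {n : ℕ} (A B : Matrix (Fin n) (Fin n) ℂ)
    (hA : IsStarNormal A) (μ : Fin n → ℂ)
    (hμ : A.charpoly = ∏ i, (Polynomial.X - Polynomial.C (μ i)))
    (lam : ℂ) (hlam : lam ∈ spectrum ℂ B) :
    ∃ k, ‖lam - μ k‖ ≤ ‖Matrix.toEuclideanCLM (𝕜 := ℂ) (B - A)‖ := by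
  classical
  by_contra hcon
  push_neg at hcon
  set T := Matrix.toEuclideanCLM (𝕜 := ℂ) (n := Fin n) with hT
  rcases Nat.eq_zero_or_pos n with hn | hn
  · have : IsEmpty (Fin n) := by rw [hn]; infer_instance
    have : Subsingleton (Matrix (Fin n) (Fin n) ℂ) := Matrix.subsingleton_of_empty_left
    exact (spectrum.mem_iff.mp hlam) (isUnit_of_subsingleton _)
  have hne : Nonempty (Fin n) := Fin.pos_iff_nonempty.mp hn
  set m := Finset.univ.inf' Finset.univ_nonempty (fun k => ‖lam - μ k‖) with hm
  have hδm : ‖T (B - A)‖ < m := by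
    rw [hm, Finset.lt_inf'_iff]
    exact fun k _ => hcon k
  have hm0 : (0:ℝ) < m := lt_of_le_of_lt (norm_nonneg _) hδm
  have hmle : ∀ k, m ≤ ‖lam - μ k‖ := fun k => Finset.inf'_le _ (Finset.mem_univ k)
  refine bf_core (T A) (T B) (hA.map T A) lam ?_ m hm0 ?_ ?_
  · rw [AlgEquiv.spectrum_eq T B]; exact hlam
  · intro z hz
    rw [AlgEquiv.spectrum_eq T A] at hz
    obtain ⟨k, hk⟩ := bf_spec_char A μ hμ z hz
    rw [hk]
    exact hmle k
  · rw [← map_sub]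
    exact hδm
end

section
/- For σ, T > 0 and integer m ≥ 1, ∑_{n=2^{m-1}}^∞ (2πσ²)^{-1/4} e^{-n²T²/(4σ²)} ≤ (π/2)^{1/4}·(√σ/T)·e^{-(T(2^{m-1}-1)/(2σ))²}. -/
open Real MeasureTheory Set

/-- Gaussian tail sum bound: for `σ, T > 0` and `m ≥ 1`,
`∑_{n=2^{m-1}}^∞ (2πσ²)^{-1/4} e^{-n²T²/(4σ²)} ≤ (π/2)^{1/4}·(√σ/T)·e^{-(T(2^{m-1}-1)/(2σ))²}`. -/
theorem gaussian_tail_sum (σ T : ℝ) (hσ : 0 < σ) (hT : 0 < T) (m : ℕ) (hm : 1 ≤ m) :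
    ∑' n : ℕ, (2 * π * σ ^ 2) ^ (-(1 : ℝ) / 4) *
        Real.exp (-(((n : ℝ) + 2 ^ (m - 1)) ^ 2 * T ^ 2) / (4 * σ ^ 2)) ≤
      (π / 2) ^ ((1 : ℝ) / 4) * (Real.sqrt σ / T) *
        Real.exp (-(T * (2 ^ (m - 1) - 1) / (2 * σ)) ^ 2) := by
  have hπ := Real.pi_pos
  have hσ' : σ ≠ 0 := hσ.ne'
  set a : ℝ := T / (2 * σ) with ha_def
  have ha : 0 < a := by positivity
  set N : ℝ := 2 ^ (m - 1) with hN_def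
  have hN1 : (1 : ℝ) ≤ N := one_le_pow₀ (by norm_num)
  set C : ℝ := (2 * π * σ ^ 2) ^ (-(1 : ℝ) / 4) with hC_def
  have hC : 0 < C := Real.rpow_pos_of_pos (by positivity) _
  set c : ℝ := N - 1 with hc_def
  have hc : 0 ≤ c := by rw [hc_def]; linarith
  have hexp : ∀ n : ℕ, -(((n : ℝ) + N) ^ 2 * T ^ 2) / (4 * σ ^ 2)
      = -(a * ((n : ℝ) + N)) ^ 2 := by
    intro n
    rw [ha_def]
    field_simp
    ring
  have hint : Integrable (fun x : ℝ => Real.exp (-a ^ 2 * x ^ 2)) :=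
    integrable_exp_neg_mul_sq (by positivity)
  -- per-term bound by an integral over [n, n+1]
  have key : ∀ n : ℕ, C * Real.exp (-(((n : ℝ) + N) ^ 2 * T ^ 2) / (4 * σ ^ 2))
      ≤ C * Real.exp (-(a * c) ^ 2) *
        ∫ x in (n : ℝ)..((n : ℝ) + 1), Real.exp (-a ^ 2 * x ^ 2) := by
    intro n
    rw [hexp n]
    have hn : (0 : ℝ) ≤ (n : ℝ) := n.cast_nonneg
    have h1 : Real.exp (-(a * ((n : ℝ) + N)) ^ 2)
        ≤ Real.exp (-(a * c) ^ 2) * Real.exp (-a ^ 2 * ((n : ℝ) + 1) ^ 2) := by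
      rw [← Real.exp_add]
      apply Real.exp_le_exp.mpr
      have h2c : 0 ≤ a ^ 2 * (c * ((n : ℝ) + 1)) := by positivity
      have hkey : (a * ((n : ℝ) + N)) ^ 2
          = (a * c) ^ 2 + a ^ 2 * ((n : ℝ) + 1) ^ 2 + 2 * (a ^ 2 * (c * ((n : ℝ) + 1))) := by
        rw [hc_def]; ring
      linarith
    have h2 : Real.exp (-a ^ 2 * ((n : ℝ) + 1) ^ 2)
        ≤ ∫ x in (n : ℝ)..((n : ℝ) + 1), Real.exp (-a ^ 2 * x ^ 2) := by
      have heq : Real.exp (-a ^ 2 * ((n : ℝ) + 1) ^ 2)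
          = ∫ _x in (n : ℝ)..((n : ℝ) + 1), Real.exp (-a ^ 2 * ((n : ℝ) + 1) ^ 2) := by
        simp
      rw [heq]
      apply intervalIntegral.integral_mono_on (by linarith) intervalIntegrable_const
        hint.intervalIntegrable
      intro x hx
      apply Real.exp_le_exp.mpr
      have hx1 := hx.1
      have hx2 := hx.2
      have hfac : 0 ≤ a ^ 2 * ((((n : ℝ) + 1) - x) * (((n : ℝ) + 1) + x)) :=
        mul_nonneg (sq_nonneg a) (mul_nonneg (by linarith) (by linarith))
      nlinarith [hfac]
    calc C * Real.exp (-(a * ((n : ℝ) + N)) ^ 2)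
        ≤ C * (Real.exp (-(a * c) ^ 2) * Real.exp (-a ^ 2 * ((n : ℝ) + 1) ^ 2)) :=
          mul_le_mul_of_nonneg_left h1 hC.le
      _ ≤ C * Real.exp (-(a * c) ^ 2) *
            ∫ x in (n : ℝ)..((n : ℝ) + 1), Real.exp (-a ^ 2 * x ^ 2) := by
          rw [mul_assoc]
          exact mul_le_mul_of_nonneg_left
            (mul_le_mul_of_nonneg_left h2 (Real.exp_pos _).le) hC.le
  -- summability
  have hsum : Summable (fun n : ℕ =>
      C * Real.exp (-(((n : ℝ) + N) ^ 2 * T ^ 2) / (4 * σ ^ 2))) := by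
    apply Summable.mul_left
    apply Summable.of_nonneg_of_le (fun n => (Real.exp_pos _).le)
      (fun n => ?_) (summable_geometric_of_lt_one (Real.exp_pos (-a ^ 2)).le
        (Real.exp_lt_one_iff.mpr (neg_neg_of_pos (by positivity))))
    rw [hexp n, ← Real.exp_nat_mul]
    apply Real.exp_le_exp.mpr
    have hn : (0 : ℝ) ≤ (n : ℝ) := n.cast_nonneg
    nlinarith [sq_nonneg (a * ((n : ℝ) + N)), sq_nonneg a, sq_nonneg ((n:ℝ) + N - 1)]
  -- the integral bound for the whole sum
  have hK : ∑' n : ℕ, C * Real.exp (-(((n : ℝ) + N) ^ 2 * T ^ 2) / (4 * σ ^ 2))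
      ≤ C * Real.exp (-(a * c) ^ 2) * (Real.sqrt (π / a ^ 2) / 2) := by
    apply Summable.tsum_le_of_sum_le hsum
    intro s
    obtain ⟨M, hM⟩ := s.exists_nat_subset_range
    have hnonneg : ∀ n : ℕ, 0 ≤ C * Real.exp (-(a * c) ^ 2) *
        ∫ x in (n : ℝ)..((n : ℝ) + 1), Real.exp (-a ^ 2 * x ^ 2) := by
      intro n
      apply mul_nonneg (by positivity)
      apply intervalIntegral.integral_nonneg (by linarith)
      intro x _
      positivity
    calc ∑ n ∈ s, C * Real.exp (-(((n : ℝ) + N) ^ 2 * T ^ 2) / (4 * σ ^ 2))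
        ≤ ∑ n ∈ s, C * Real.exp (-(a * c) ^ 2) *
            ∫ x in (n : ℝ)..((n : ℝ) + 1), Real.exp (-a ^ 2 * x ^ 2) :=
          Finset.sum_le_sum fun n _ => key n
      _ ≤ ∑ n ∈ Finset.range M, C * Real.exp (-(a * c) ^ 2) *
            ∫ x in (n : ℝ)..((n : ℝ) + 1), Real.exp (-a ^ 2 * x ^ 2) :=
          Finset.sum_le_sum_of_subset_of_nonneg hM fun n _ _ => hnonneg n
      _ = C * Real.exp (-(a * c) ^ 2) * ∑ n ∈ Finset.range M,
            ∫ x in ((fun k : ℕ => (k : ℝ)) n)..((fun k : ℕ => (k : ℝ)) (n + 1)),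
              Real.exp (-a ^ 2 * x ^ 2) := by
          rw [Finset.mul_sum]
          congr 1
          ext n
          push_cast
          ring_nf
      _ = C * Real.exp (-(a * c) ^ 2) *
            ∫ x in (0 : ℝ)..(M : ℝ), Real.exp (-a ^ 2 * x ^ 2) := by
          rw [intervalIntegral.sum_integral_adjacent_intervals
            (fun k _ => hint.intervalIntegrable)]
          norm_num
      _ ≤ C * Real.exp (-(a * c) ^ 2) * (Real.sqrt (π / a ^ 2) / 2) := by
          apply mul_le_mul_of_nonneg_left _ (by positivity)
          rw [← integral_gaussian_Ioi (a ^ 2),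
            intervalIntegral.integral_of_le (Nat.cast_nonneg M)]
          apply setIntegral_mono_set hint.integrableOn
          · filter_upwards with x using (Real.exp_pos _).le
          · filter_upwards with x hx using hx.1
  refine hK.trans_eq ?_
  -- evaluate the constants
  have h1 : (a * c) ^ 2 = (T * c / (2 * σ)) ^ 2 := by rw [ha_def]; ring
  have hsq : Real.sqrt (π / a ^ 2) = Real.sqrt π / a := by
    rw [Real.sqrt_div hπ.le, Real.sqrt_sq ha.le]
  have h2 : C * (Real.sqrt (π / a ^ 2) / 2) = (π / 2) ^ ((1 : ℝ) / 4) * (Real.sqrt σ / T) := by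
    rw [hsq]
    have hkey : C * Real.sqrt π * σ = (π / 2) ^ ((1 : ℝ) / 4) * Real.sqrt σ := by
      have h4 : (C * Real.sqrt π * σ) ^ (4 : ℕ)
          = ((π / 2) ^ ((1 : ℝ) / 4) * Real.sqrt σ) ^ (4 : ℕ) := by
        have hb : (0 : ℝ) < 2 * π * σ ^ 2 := by positivity
        have hC4 : C ^ (4 : ℕ) = (2 * π * σ ^ 2)⁻¹ := by
          rw [hC_def, ← Real.rpow_natCast ((2 * π * σ ^ 2) ^ (-(1 : ℝ) / 4)) 4,
            ← Real.rpow_mul hb.le]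
          norm_num [Real.rpow_neg_one]
        have hP4 : ((π / 2) ^ ((1 : ℝ) / 4)) ^ (4 : ℕ) = π / 2 := by
          rw [← Real.rpow_natCast ((π / 2) ^ ((1 : ℝ) / 4)) 4,
            ← Real.rpow_mul (by positivity : (0:ℝ) ≤ π / 2)]
          norm_num
        have hsπ : Real.sqrt π ^ (4 : ℕ) = π ^ 2 := by
          rw [show (4 : ℕ) = 2 * 2 by norm_num, pow_mul, Real.sq_sqrt hπ.le]
        have hsσ : Real.sqrt σ ^ (4 : ℕ) = σ ^ 2 := by
          rw [show (4 : ℕ) = 2 * 2 by norm_num, pow_mul, Real.sq_sqrt hσ.le]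
        rw [mul_pow, mul_pow, mul_pow, hC4, hP4, hsπ, hsσ]
        field_simp
      have h1' : (0 : ℝ) ≤ C * Real.sqrt π * σ := by positivity
      have h2' : (0 : ℝ) ≤ (π / 2) ^ ((1 : ℝ) / 4) * Real.sqrt σ := by positivity
      exact (pow_left_strictMonoOn₀ (n := 4) (by norm_num)).injOn h1' h2' h4
    rw [ha_def]
    field_simp
    nlinarith [hkey, Real.sqrt_nonneg π, Real.sqrt_nonneg σ, hC.le]
  calc C * Real.exp (-(a * c) ^ 2) * (Real.sqrt (π / a ^ 2) / 2)
      = C * (Real.sqrt (π / a ^ 2) / 2) * Real.exp (-(T * c / (2 * σ)) ^ 2) := by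
        rw [h1]; ring
    _ = (π / 2) ^ ((1 : ℝ) / 4) * (Real.sqrt σ / T) *
          Real.exp (-(T * (N - 1) / (2 * σ)) ^ 2) := by rw [h2, hc_def]
end

section
/- For every positive integer n and x > 0, the n-th Bell (Touchard) polynomial satisfies B_n(x) ≤ (n / log(1 + n/x))^n. -/
open scoped Nat


/-- Stirling numbers of the second kind `S(n,k)`. -/
def stirling2 : ℕ → ℕ → ℕ
  | 0, 0 => 1
  | 0, _ + 1 => 0
  | _ + 1, 0 => 0
  | n + 1, k + 1 => (k + 1) * stirling2 n (k + 1) + stirling2 n k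

lemma stirling2_eq_zero : ∀ n k : ℕ, n < k → stirling2 n k = 0
  | 0, _ + 1, _ => rfl
  | n + 1, k + 1, h => by
    rw [stirling2, stirling2_eq_zero n (k+1) (by omega), stirling2_eq_zero n k (by omega)]; ring

lemma desc_mul (j k : ℕ) :
    j * j.descFactorial k = k * j.descFactorial k + j.descFactorial (k + 1) := by
  rw [Nat.descFactorial_succ]
  rcases le_or_gt k j with h | h
  · rw [← Nat.add_mul]; congr 1; omega
  · rw [Nat.descFactorial_eq_zero_iff_lt.2 h]; simp

lemma pow_eq_sum_stirling (n j : ℕ) :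
    j ^ n = ∑ k ∈ Finset.range (n + 1), stirling2 n k * j.descFactorial k := by
  induction n with
  | zero => simp [stirling2]
  | succ n ih =>
    have : j ^ (n+1) = ∑ k ∈ Finset.range (n + 1),
        (stirling2 n k * (k * j.descFactorial k) + stirling2 n k * j.descFactorial (k+1)) := by
      rw [pow_succ, ih, Finset.sum_mul]
      refine Finset.sum_congr rfl fun k _ => ?_
      rw [mul_assoc, mul_comm (j.descFactorial k) j, desc_mul, Nat.mul_add]
    rw [this, Finset.sum_add_distrib]
    rw [Finset.sum_range_succ' (fun k => stirling2 (n+1) k * j.descFactorial k) (n+1)]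
    have h0 : stirling2 (n+1) 0 * j.descFactorial 0 = 0 := by simp [stirling2]
    rw [h0, add_zero]
    have hrw : ∀ k, stirling2 (n+1) (k+1) * j.descFactorial (k+1)
        = (k+1) * stirling2 n (k+1) * j.descFactorial (k+1)
          + stirling2 n k * j.descFactorial (k+1) := by
      intro k; rw [stirling2, Nat.add_mul]
    simp only [hrw]
    rw [Finset.sum_add_distrib]
    congr 1
    -- ∑_{k<n+1} S(n,k) * (k * D k) = ∑_{k<n+1} (k+1) S(n,k+1) D(k+1)
    rw [Finset.sum_range_succ' (fun k => stirling2 n k * (k * j.descFactorial k)) n]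
    rw [Finset.sum_range_succ (fun k => (k+1) * stirling2 n (k+1) * j.descFactorial (k+1)) n]
    rw [stirling2_eq_zero n (n+1) (by omega)]
    simp [mul_comm, mul_assoc, mul_left_comm]

lemma real_exp_tsum (x : ℝ) : Real.exp x = ∑' j : ℕ, x ^ j / j ! := by
  rw [Real.exp_eq_exp_ℝ, NormedSpace.exp_eq_tsum_div]

lemma poly_le_exp (n : ℕ) (y : ℝ) (hy : 0 ≤ y) :
    y ^ n ≤ ((n : ℝ) / Real.exp 1) ^ n * Real.exp y := by
  rcases Nat.eq_zero_or_pos n with rfl | hn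
  · simpa using Real.one_le_exp hy
  · have hn' : (0:ℝ) < n := by positivity
    have h1 : y / n ≤ Real.exp (y / n - 1) := by
      have := Real.add_one_le_exp (y / n - 1)
      linarith
    have h2 : y ≤ (n : ℝ) / Real.exp 1 * Real.exp (y / n) := by
      have := mul_le_mul_of_nonneg_left h1 (le_of_lt hn')
      rw [mul_div_cancel₀ _ (ne_of_gt hn')] at this
      calc y ≤ n * Real.exp (y / n - 1) := this
        _ = (n : ℝ) / Real.exp 1 * Real.exp (y / n) := by
            rw [Real.exp_sub]; ring
    calc y ^ n ≤ ((n : ℝ) / Real.exp 1 * Real.exp (y / n)) ^ n :=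
          pow_le_pow_left₀ hy h2 n
      _ = ((n : ℝ) / Real.exp 1) ^ n * Real.exp y := by
          rw [mul_pow, ← Real.exp_nat_mul, mul_div_cancel₀ _ (ne_of_gt hn')]

lemma hsum_poly (m : ℕ) (c : ℝ) (hc : 0 ≤ c) :
    Summable (fun j : ℕ => (j : ℝ) ^ m * c ^ j / j !) := by
  refine Summable.of_nonneg_of_le (fun j => by positivity)
    (fun j => ?_) (((Real.summable_pow_div_factorial (Real.exp 1 * c)).mul_left
      (((m : ℝ) / Real.exp 1) ^ m)))
  have h := poly_le_exp m (j : ℝ) (by positivity)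
  calc (j : ℝ) ^ m * c ^ j / j !
      ≤ (((m : ℝ) / Real.exp 1) ^ m * Real.exp j) * c ^ j / j ! := by
        gcongr
    _ = ((m : ℝ) / Real.exp 1) ^ m * ((Real.exp 1 * c) ^ j / j !) := by
        rw [mul_pow, ← Real.exp_nat_mul, mul_one]; ring

lemma hsum_desc (k : ℕ) (x : ℝ) (hx : 0 ≤ x) :
    Summable (fun j : ℕ => (Nat.descFactorial j k : ℝ) * x ^ j / j !) := by
  refine Summable.of_nonneg_of_le (fun j => by positivity) (fun j => ?_) (hsum_poly k x hx)
  gcongr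
  exact_mod_cast Nat.descFactorial_le_pow j k

lemma desc_tsum (k : ℕ) (x : ℝ) (hx : 0 < x) :
    ∑' j : ℕ, (Nat.descFactorial j k : ℝ) * x ^ j / j ! = x ^ k * Real.exp x := by
  have hf := hsum_desc k x hx.le
  rw [← Summable.sum_add_tsum_nat_add k hf]
  have h0 : ∑ i ∈ Finset.range k, (Nat.descFactorial i k : ℝ) * x ^ i / i ! = 0 := by
    refine Finset.sum_eq_zero fun i hi => ?_
    rw [Nat.descFactorial_eq_zero_iff_lt.2 (Finset.mem_range.1 hi)]
    simp
  rw [h0, zero_add]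
  have hterm : ∀ i : ℕ, (Nat.descFactorial (i + k) k : ℝ) * x ^ (i + k) / (i + k)!
      = x ^ k * (x ^ i / i !) := by
    intro i
    have hd : (i ! : ℝ) * (Nat.descFactorial (i + k) k : ℝ) = ((i + k)! : ℝ) := by
      have := Nat.factorial_mul_descFactorial (Nat.le_add_left k i)
      rw [Nat.add_sub_cancel] at this
      exact_mod_cast this
    have hi : (i ! : ℝ) ≠ 0 := by positivity
    have hik : ((i + k)! : ℝ) ≠ 0 := by positivity
    field_simp
    rw [pow_add, ← hd]
    ring
  rw [tsum_congr hterm, tsum_mul_left, ← real_exp_tsum]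

lemma dobinski (n : ℕ) (x : ℝ) (hx : 0 < x) :
    ∑' j : ℕ, (j : ℝ) ^ n * x ^ j / j !
      = Real.exp x * ∑ k ∈ Finset.range (n + 1), (stirling2 n k : ℝ) * x ^ k := by
  have hterm : ∀ j : ℕ, (j : ℝ) ^ n * x ^ j / j !
      = ∑ k ∈ Finset.range (n + 1),
          (stirling2 n k : ℝ) * ((Nat.descFactorial j k : ℝ) * x ^ j / j !) := by
    intro j
    have h1 : ((j : ℝ)) ^ n = ∑ k ∈ Finset.range (n + 1),
        (stirling2 n k : ℝ) * (Nat.descFactorial j k : ℝ) := by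
      exact_mod_cast congrArg (Nat.cast : ℕ → ℝ) (pow_eq_sum_stirling n j)
    rw [h1, Finset.sum_mul, Finset.sum_div]
    exact Finset.sum_congr rfl fun k _ => by ring
  rw [tsum_congr hterm,
    Summable.tsum_finsetSum (fun k _ => (hsum_desc k x hx.le).mul_left _)]
  rw [Finset.mul_sum]
  refine Finset.sum_congr rfl fun k _ => ?_
  rw [tsum_mul_left, desc_tsum k x hx]
  ring

/-- Sharp bound on Bell (Touchard) polynomials: for `n ≥ 1` and `x > 0`,
`Bₙ(x) = ∑_{k=0}^n S(n,k) x^k ≤ (n/log(1 + n/x))^n`. -/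
theorem bell_polynomial_le (n : ℕ) (hn : 0 < n) (x : ℝ) (hx : 0 < x) :
    ∑ k ∈ Finset.range (n + 1), (stirling2 n k : ℝ) * x ^ k ≤
      ((n : ℝ) / Real.log (1 + n / x)) ^ n := by
  set t := Real.log (1 + n / x) with ht_def
  have hnx : 0 < (n : ℝ) / x := by positivity
  have ht : 0 < t := Real.log_pos (by linarith)
  have het : Real.exp t = 1 + n / x := Real.exp_log (by linarith)
  have hxt : Real.exp t * x = x + n := by rw [het]; field_simp
  have hT : Summable (fun j : ℕ => (j : ℝ) ^ n * x ^ j / j !) := hsum_poly n x hx.le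
  have hG : Summable (fun j : ℕ =>
      ((n : ℝ) / (Real.exp 1 * t)) ^ n * ((Real.exp t * x) ^ j / j !)) :=
    (Real.summable_pow_div_factorial _).mul_left _
  have hbound : ∀ j : ℕ, (j : ℝ) ^ n * x ^ j / j !
      ≤ ((n : ℝ) / (Real.exp 1 * t)) ^ n * ((Real.exp t * x) ^ j / j !) := by
    intro j
    have h1 := poly_le_exp n (t * j) (by positivity)
    rw [mul_pow] at h1
    have h2 : (j : ℝ) ^ n ≤ ((n : ℝ) / (Real.exp 1 * t)) ^ n * Real.exp (t * j) := by
      have htn : (0 : ℝ) < t ^ n := pow_pos ht n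
      rw [← div_div, div_pow, div_mul_eq_mul_div, le_div_iff₀ htn, mul_comm]
      exact h1
    calc (j : ℝ) ^ n * x ^ j / j !
        ≤ (((n : ℝ) / (Real.exp 1 * t)) ^ n * Real.exp (t * j)) * x ^ j / j ! := by gcongr
      _ = ((n : ℝ) / (Real.exp 1 * t)) ^ n * ((Real.exp t * x) ^ j / j !) := by
          rw [mul_comm t (j : ℝ), Real.exp_nat_mul, mul_pow]; ring
  have hTle : ∑' j : ℕ, (j : ℝ) ^ n * x ^ j / j !
      ≤ ((n : ℝ) / (Real.exp 1 * t)) ^ n * Real.exp (Real.exp t * x) := by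
    calc ∑' j : ℕ, (j : ℝ) ^ n * x ^ j / j !
        ≤ ∑' j : ℕ, ((n : ℝ) / (Real.exp 1 * t)) ^ n * ((Real.exp t * x) ^ j / j !) :=
          Summable.tsum_le_tsum hbound hT hG
      _ = _ := by rw [tsum_mul_left, ← real_exp_tsum]
  have hB : ∑ k ∈ Finset.range (n + 1), (stirling2 n k : ℝ) * x ^ k
      = Real.exp (-x) * ∑' j : ℕ, (j : ℝ) ^ n * x ^ j / j ! := by
    rw [dobinski n x hx, Real.exp_neg, inv_mul_cancel_left₀ (Real.exp_ne_zero x)]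
  rw [hB]
  calc Real.exp (-x) * ∑' j : ℕ, (j : ℝ) ^ n * x ^ j / j !
      ≤ Real.exp (-x) * (((n : ℝ) / (Real.exp 1 * t)) ^ n * Real.exp (Real.exp t * x)) :=
        mul_le_mul_of_nonneg_left hTle (Real.exp_nonneg _)
    _ = ((n : ℝ) / t) ^ n := by
        rw [hxt]
        have he1 : Real.exp (-x) * Real.exp (x + n) = Real.exp 1 ^ n := by
          rw [← Real.exp_add, ← Real.exp_nat_mul, mul_one]; ring_nf
        calc Real.exp (-x) * (((n : ℝ) / (Real.exp 1 * t)) ^ n * Real.exp (x + n))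
            = ((n : ℝ) / (Real.exp 1 * t)) ^ n * (Real.exp (-x) * Real.exp (x + n)) := by ring
          _ = ((n : ℝ) / (Real.exp 1 * t)) ^ n * Real.exp 1 ^ n := by rw [he1]
          _ = ((n : ℝ) / t) ^ n := by
              rw [← mul_pow]
              congr 1
              field_simp
end
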